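/- arXiv:2102.10761 — 2 statements merged into one kernel-verified Lean document; each statement's English description precedes it below -/
import Mathlib

section
/- For all integers g1, g2 ≥ 0, setting g = g1 + g2 + 1, the following equality holds in the rationals: (Σ_{l=0}^{3g1+2} (3g1+3-l)·a_{l-1, 3g-l}) / ((6g1+5)!!·(6g2+1)!!) = ((6g-1)!! / (24^g · g! · (6g1+5)!! · (6g2+1)!!)) · ((6g-3)/(6g-1) + Σ_{i=1}^{3g1+1} b_{g,i}). (This expresses that the Bertola–Dubrovin–Yang formula and the Zograf formula for the two-point Witten–Kontsevich correlator ⟨τ_{3g1+2} τ_{3g2}⟩_g agree.) -/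
/-- `dfOdd n = (2n-1)!!`, so `dfOdd 0 = (-1)!! = 1`. -/
def dfOdd : ℕ → ℚ
  | 0 => 1
  | n + 1 => (2 * n + 1) * dfOdd n

/-- Double factorial `m!!` for odd integers `m ≥ -1` (value irrelevant elsewhere):
`df (2t-1) = (2t-1)!!`, with the convention `(-1)!! = 1`. -/
def df (m : ℤ) : ℚ := dfOdd ((m + 1) / 2).toNat

/-- Factorial of an integer (`m! ` for `m ≥ 0`), as a rational number. -/
def zfact (m : ℤ) : ℚ := (Nat.factorial m.toNat : ℚ)

/-- The Bertola–Dubrovin–Yang coefficients `a_{k1,k2}`. -/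
def a (k1 k2 : ℤ) : ℚ :=
  if k1 % 3 = 1 ∧ k2 % 3 = 1 ∧ 1 ≤ k1 ∧ 1 ≤ k2 then
    -- k1 = 3*g1 - 2, k2 = 3*g2 - 2 with g1, g2 ≥ 1
    let g1 := (k1 + 2) / 3;
    let g2 := (k2 + 2) / 3;
    df (6 * g1 - 5) * df (6 * g2 - 5) /
      (2 * (24 : ℚ) ^ (g1 + g2 - 2) * zfact (g1 - 1) * zfact (g2 - 1))
  else if k1 % 3 = 0 ∧ k2 % 3 = 2 ∧ 0 ≤ k1 ∧ -1 ≤ k2 then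
    -- k1 = 3*g1, k2 = 3*g2 - 1 with g1, g2 ≥ 0
    let g1 := k1 / 3;
    let g2 := (k2 + 1) / 3;
    -(df (6 * g1 - 1) * df (6 * g2 - 1) / ((24 : ℚ) ^ (g1 + g2) * zfact g1 * zfact g2)) *
      ((6 * (g2 : ℚ) + 1) / (6 * (g2 : ℚ) - 1))
  else if k1 % 3 = 2 ∧ k2 % 3 = 0 ∧ -1 ≤ k1 ∧ 0 ≤ k2 then
    -- k1 = 3*g1 - 1, k2 = 3*g2 with g1, g2 ≥ 0
    let g1 := (k1 + 1) / 3;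
    let g2 := k2 / 3;
    -(df (6 * g1 - 1) * df (6 * g2 - 1) / ((24 : ℚ) ^ (g1 + g2) * zfact g1 * zfact g2)) *
      ((6 * (g1 : ℚ) + 1) / (6 * (g1 : ℚ) - 1))
  else 0

/-- The numerator `c_{g,k}` in Zograf's coefficients. -/
def c (g k : ℤ) : ℚ :=
  if k % 3 = 2 then
    -- k = 3*j - 1
    let j := (k + 1) / 3;
    df (6 * j - 1) * zfact (g - 1) / (zfact j * zfact (g - j)) * ((g : ℚ) - 2 * (j : ℚ))
  else if k % 3 = 0 then
    -- k = 3*j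
    let j := k / 3;
    -2 * df (6 * j + 1) * zfact (g - 1) / (zfact j * zfact (g - 1 - j))
  else
    -- k = 3*j + 1
    let j := (k - 1) / 3;
    2 * df (6 * j + 3) * zfact (g - 1) / (zfact j * zfact (g - 1 - j))

/-- Zograf's coefficients `b_{g,k}`. -/
def b (g k : ℤ) : ℚ := df (6 * g - 3 - 2 * k) / df (6 * g - 1) * c g k

lemma dfOdd_pos (n : ℕ) : 0 < dfOdd n := by
  induction n with
  | zero => norm_num [dfOdd]
  | succ n ih => rw [dfOdd]; positivity

lemma df_pos (m : ℤ) : 0 < df m := dfOdd_pos _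

lemma df_ne (m : ℤ) : df m ≠ 0 := (df_pos m).ne'

lemma zfact_pos (m : ℤ) : 0 < zfact m := by
  unfold zfact; exact_mod_cast Nat.factorial_pos _

lemma zfact_ne (m : ℤ) : zfact m ≠ 0 := (zfact_pos m).ne'

lemma df_step (m : ℤ) (h : -1 ≤ m) (ho : m % 2 = 1) : df (m + 2) = ((m : ℚ) + 2) * df m := by
  have h2 : ((m + 2 + 1) / 2).toNat = ((m + 1) / 2).toNat + 1 := by omega
  have h3 : (2 * ((((m + 1) / 2).toNat : ℤ)) + 1 : ℤ) = m + 2 := by omega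
  have h4 : (2 * ((((m + 1) / 2).toNat : ℚ)) + 1 : ℚ) = (m : ℚ) + 2 := by exact_mod_cast h3
  unfold df
  rw [h2, dfOdd, ← h4]

lemma zfact_step (m : ℤ) (h : 1 ≤ m) : zfact m = (m : ℚ) * zfact (m - 1) := by
  have h2 : m.toNat = (m - 1).toNat + 1 := by omega
  have h3 : (((m - 1).toNat : ℤ) + 1 : ℤ) = m := by omega
  have h4 : (((m - 1).toNat : ℚ) + 1 : ℚ) = (m : ℚ) := by exact_mod_cast h3
  unfold zfact
  rw [h2, Nat.factorial_succ]
  push_cast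
  rw [h4]

lemma aval11 (k G : ℤ) (hk : 0 ≤ k) (hG : k + 1 ≤ G) :
    a (3 * k + 1) (3 * G - (3 * k + 2)) =
      df (6 * k + 1) * df (6 * (G - k) - 5) /
        (2 * (24 : ℚ) ^ (G - 1) * zfact k * zfact (G - k - 1)) := by
  unfold a
  rw [if_pos (by omega)]
  have e1 : (3 * k + 1 + 2) / 3 = k + 1 := by omega
  have e2 : (3 * G - (3 * k + 2) + 2) / 3 = G - k := by omega
  simp only [e1, e2]
  rw [show 6 * (k + 1) - 5 = 6 * k + 1 by ring, show k + 1 + (G - k) - 2 = G - 1 by ring,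
    show k + 1 - 1 = k by ring]

lemma aval02 (k G : ℤ) (hk : 0 ≤ k) (hG : k ≤ G) :
    a (3 * k) (3 * G - (3 * k + 1)) =
      -(df (6 * k - 1) * df (6 * (G - k) - 1) / ((24 : ℚ) ^ G * zfact k * zfact (G - k))) *
        ((6 * ((G : ℚ) - (k : ℚ)) + 1) / (6 * ((G : ℚ) - (k : ℚ)) - 1)) := by
  unfold a
  rw [if_neg (by omega), if_pos (by omega)]
  have e1 : 3 * k / 3 = k := by omega
  have e2 : (3 * G - (3 * k + 1) + 1) / 3 = G - k := by omega
  simp only [e1, e2]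
  rw [show k + (G - k) = G by ring]
  push_cast
  ring

lemma aval20 (k G : ℤ) (hk : 0 ≤ k) (hG : k ≤ G) :
    a (3 * k - 1) (3 * G - 3 * k) =
      -(df (6 * k - 1) * df (6 * (G - k) - 1) / ((24 : ℚ) ^ G * zfact k * zfact (G - k))) *
        ((6 * (k : ℚ) + 1) / (6 * (k : ℚ) - 1)) := by
  unfold a
  rw [if_neg (by omega), if_neg (by omega), if_pos (by omega)]
  have e1 : (3 * k - 1 + 1) / 3 = k := by omega
  have e2 : (3 * G - 3 * k) / 3 = G - k := by omega
  simp only [e1, e2]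
  rw [show k + (G - k) = G by ring]

lemma cval2 (g j : ℤ) :
    c g (3 * j - 1) =
      df (6 * j - 1) * zfact (g - 1) / (zfact j * zfact (g - j)) * ((g : ℚ) - 2 * (j : ℚ)) := by
  unfold c
  rw [if_pos (by omega)]
  have e1 : (3 * j - 1 + 1) / 3 = j := by omega
  simp only [e1]

lemma cval0 (g j : ℤ) :
    c g (3 * j) = -2 * df (6 * j + 1) * zfact (g - 1) / (zfact j * zfact (g - 1 - j)) := by
  unfold c
  rw [if_neg (by omega), if_pos (by omega)]
  have e1 : 3 * j / 3 = j := by omega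
  simp only [e1]

lemma cval1 (g j : ℤ) :
    c g (3 * j + 1) = 2 * df (6 * j + 3) * zfact (g - 1) / (zfact j * zfact (g - 1 - j)) := by
  unfold c
  rw [if_neg (by omega), if_neg (by omega)]
  have e1 : (3 * j + 1 - 1) / 3 = j := by omega
  simp only [e1]

lemma step2 (k G : ℤ) (hk : 0 ≤ k) (hG : k + 1 ≤ G) :
    a (3 * k + 1) (3 * G - (3 * k + 2)) =
      df (6 * G - 1) / ((24 : ℚ) ^ G * zfact G) * (b G (3 * k + 1) - b G (3 * k)) := by
  rw [aval11 k G hk hG, b, b, cval1 G k, cval0 G k]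
  have d1 : df (6 * G - 3 - 2 * (3 * k)) = (6 * (G : ℚ) - 6 * (k : ℚ) - 3) *
      df (6 * G - 3 - 2 * (3 * k + 1)) := by
    have h := df_step (6 * G - 6 * k - 5) (by omega) (by omega)
    rw [show 6 * G - 3 - 2 * (3 * k) = 6 * G - 6 * k - 5 + 2 by ring,
      show 6 * G - 3 - 2 * (3 * k + 1) = 6 * G - 6 * k - 5 by ring, h]
    push_cast; ring
  have d2 : df (6 * k + 3) = (6 * (k : ℚ) + 3) * df (6 * k + 1) := by
    have h := df_step (6 * k + 1) (by omega) (by omega)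
    rw [show (6 * k + 3 : ℤ) = 6 * k + 1 + 2 by ring, h]
    push_cast; ring
  have d3 : df (6 * (G - k) - 5) = df (6 * G - 3 - 2 * (3 * k + 1)) := by
    rw [show 6 * (G - k) - 5 = 6 * G - 3 - 2 * (3 * k + 1) by ring]
  have z1 : zfact G = (G : ℚ) * zfact (G - 1) := zfact_step G (by omega)
  have z2 : zfact (G - k - 1) = zfact (G - 1 - k) := by
    rw [show G - k - 1 = G - 1 - k by ring]
  have p1 : (24 : ℚ) ^ G = (24 : ℚ) ^ (G - 1) * 24 := by
    rw [← zpow_add_one₀ (by norm_num : (24 : ℚ) ≠ 0)]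
    norm_num
  rw [d1, d2, d3, z1, z2, p1]
  have n1 : df (6 * G - 3 - 2 * (3 * k + 1)) ≠ 0 := df_ne _
  have n2 : df (6 * G - 1) ≠ 0 := df_ne _
  have n3 : zfact k ≠ 0 := zfact_ne _
  have n4 : zfact (G - 1 - k) ≠ 0 := zfact_ne _
  have n5 : zfact (G - 1) ≠ 0 := zfact_ne _
  have n6 : (24 : ℚ) ^ (G - 1) ≠ 0 := zpow_ne_zero _ (by norm_num)
  have n7 : (G : ℚ) ≠ 0 := Int.cast_ne_zero.mpr (by omega)
  field_simp
  ring

lemma step1 (k G : ℤ) (hk : 0 ≤ k) (hG : k + 1 ≤ G) :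
    a (3 * k) (3 * G - (3 * k + 1)) =
      df (6 * G - 1) / ((24 : ℚ) ^ G * zfact G) * (b G (3 * k) - b G (3 * k - 1)) := by
  rw [aval02 k G hk (by omega), b, b, cval0 G k, cval2 G k]
  have d1 : df (6 * (G - k) - 1) = (6 * (G : ℚ) - 6 * (k : ℚ) - 1) *
      df (6 * G - 3 - 2 * (3 * k)) := by
    have h := df_step (6 * G - 6 * k - 3) (by omega) (by omega)
    rw [show 6 * (G - k) - 1 = 6 * G - 6 * k - 3 + 2 by ring,
      show 6 * G - 3 - 2 * (3 * k) = 6 * G - 6 * k - 3 by ring, h]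
    push_cast; ring
  have d2 : df (6 * G - 3 - 2 * (3 * k - 1)) = (6 * (G : ℚ) - 6 * (k : ℚ) - 1) *
      df (6 * G - 3 - 2 * (3 * k)) := by
    have h := df_step (6 * G - 6 * k - 3) (by omega) (by omega)
    rw [show 6 * G - 3 - 2 * (3 * k - 1) = 6 * G - 6 * k - 3 + 2 by ring,
      show 6 * G - 3 - 2 * (3 * k) = 6 * G - 6 * k - 3 by ring, h]
    push_cast; ring
  have d3 : df (6 * k + 1) = (6 * (k : ℚ) + 1) * df (6 * k - 1) := by
    have h := df_step (6 * k - 1) (by omega) (by omega)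
    rw [show (6 * k + 1 : ℤ) = 6 * k - 1 + 2 by ring, h]
    push_cast; ring
  have z1 : zfact G = (G : ℚ) * zfact (G - 1) := zfact_step G (by omega)
  have z2 : zfact (G - k) = ((G : ℚ) - (k : ℚ)) * zfact (G - 1 - k) := by
    rw [zfact_step (G - k) (by omega), show G - k - 1 = G - 1 - k by ring]
    push_cast; ring
  rw [d1, d2, d3, z1, z2]
  have n1 : df (6 * G - 3 - 2 * (3 * k)) ≠ 0 := df_ne _
  have n2 : df (6 * G - 1) ≠ 0 := df_ne _
  have n3 : zfact k ≠ 0 := zfact_ne _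
  have n4 : zfact (G - 1 - k) ≠ 0 := zfact_ne _
  have n5 : zfact (G - 1) ≠ 0 := zfact_ne _
  have n6 : (24 : ℚ) ^ G ≠ 0 := zpow_ne_zero _ (by norm_num)
  have n7 : (G : ℚ) ≠ 0 := Int.cast_ne_zero.mpr (by omega)
  have h9 : ((6 * (G - k) - 1 : ℤ) : ℚ) ≠ 0 := Int.cast_ne_zero.mpr (by omega)
  push_cast at h9
  have n8 : 6 * ((G : ℚ) - (k : ℚ)) - 1 ≠ 0 := by
    intro hEq; exact h9 (by linear_combination hEq)
  have h10 : ((G - k : ℤ) : ℚ) ≠ 0 := Int.cast_ne_zero.mpr (by omega)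
  push_cast at h10
  have n10 : (G : ℚ) - (k : ℚ) ≠ 0 := h10
  field_simp
  ring

lemma step0 (k G : ℤ) (hk : 1 ≤ k) (hG : k ≤ G) :
    a (3 * k - 1) (3 * G - 3 * k) =
      df (6 * G - 1) / ((24 : ℚ) ^ G * zfact G) * (b G (3 * k - 1) - b G (3 * k - 2)) := by
  rw [aval20 k G (by omega) hG, b, b, cval2 G k, show (3 * k - 2 : ℤ) = 3 * (k - 1) + 1 by ring,
    cval1 G (k - 1), show 6 * (k - 1) + 3 = 6 * k - 3 by ring,
    show G - 1 - (k - 1) = G - k by ring]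
  have d0 : df (6 * (G - k) - 1) = df (6 * G - 3 - 2 * (3 * k - 1)) := by
    rw [show 6 * (G - k) - 1 = 6 * G - 3 - 2 * (3 * k - 1) by ring]
  have d1 : df (6 * G - 3 - 2 * (3 * (k - 1) + 1)) = (6 * (G : ℚ) - 6 * (k : ℚ) + 1) *
      df (6 * G - 3 - 2 * (3 * k - 1)) := by
    have h := df_step (6 * G - 6 * k - 1) (by omega) (by omega)
    rw [show 6 * G - 3 - 2 * (3 * (k - 1) + 1) = 6 * G - 6 * k - 1 + 2 by ring,
      show 6 * G - 3 - 2 * (3 * k - 1) = 6 * G - 6 * k - 1 by ring, h]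
    push_cast; ring
  have d3 : df (6 * k - 1) = (6 * (k : ℚ) - 1) * df (6 * k - 3) := by
    have h := df_step (6 * k - 3) (by omega) (by omega)
    rw [show (6 * k - 1 : ℤ) = 6 * k - 3 + 2 by ring, h]
    push_cast; ring
  have z1 : zfact G = (G : ℚ) * zfact (G - 1) := zfact_step G (by omega)
  have z2 : zfact k = (k : ℚ) * zfact (k - 1) := zfact_step k (by omega)
  rw [d0, d1, d3, z1, z2]
  have n1 : df (6 * G - 3 - 2 * (3 * k - 1)) ≠ 0 := df_ne _
  have n2 : df (6 * G - 1) ≠ 0 := df_ne _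
  have n3 : zfact (k - 1) ≠ 0 := zfact_ne _
  have n4 : zfact (G - k) ≠ 0 := zfact_ne _
  have n5 : zfact (G - 1) ≠ 0 := zfact_ne _
  have n6 : (24 : ℚ) ^ G ≠ 0 := zpow_ne_zero _ (by norm_num)
  have n7 : (G : ℚ) ≠ 0 := Int.cast_ne_zero.mpr (by omega)
  have n9 : (k : ℚ) ≠ 0 := Int.cast_ne_zero.mpr (by omega)
  have h9 : ((6 * k - 1 : ℤ) : ℚ) ≠ 0 := Int.cast_ne_zero.mpr (by omega)
  push_cast at h9
  have n8 : 6 * (k : ℚ) - 1 ≠ 0 := by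
    intro hEq; exact h9 (by linear_combination hEq)
  field_simp
  ring

lemma aM1 (G : ℤ) (hG : 0 ≤ G) :
    a (-1) (3 * G) = df (6 * G - 1) / ((24 : ℚ) ^ G * zfact G) := by
  have h := aval20 0 G le_rfl hG
  norm_num at h
  rw [h]
  have e1 : df (-1) = 1 := rfl
  have e2 : zfact 0 = 1 := rfl
  rw [e1, e2]
  push_cast
  ring

lemma a0 (G : ℤ) (hG : 0 ≤ G) :
    a 0 (3 * G - 1) = -(df (6 * G - 1) / ((24 : ℚ) ^ G * zfact G)) *
      ((6 * (G : ℚ) + 1) / (6 * (G : ℚ) - 1)) := by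
  have h := aval02 0 G le_rfl hG
  norm_num at h
  rw [h]
  have e1 : df (-1) = 1 := rfl
  have e2 : zfact 0 = 1 := rfl
  rw [e1, e2]
  push_cast
  ring

lemma Icc_ins (a b : ℤ) (h : a ≤ b + 1) :
    Finset.Icc a (b + 1) = insert (b + 1) (Finset.Icc a b) := by
  ext x; simp only [Finset.mem_Icc, Finset.mem_insert]; omega

lemma Icc_ins_bot (a b : ℤ) (h : a ≤ b) :
    Finset.Icc a b = insert a (Finset.Icc (a + 1) b) := by
  ext x; simp only [Finset.mem_Icc, Finset.mem_insert]; omega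

lemma bval0 (G : ℤ) (hG : 1 ≤ G) : b G 0 = -2 * df (6 * G - 3) / df (6 * G - 1) := by
  have hc : c G 0 = -2 := by
    rw [show (0 : ℤ) = 3 * (0 : ℤ) by ring, cval0 G 0]
    have e1 : df (6 * (0:ℤ) + 1) = 1 := by norm_num [df]; rw [dfOdd, dfOdd]; norm_num
    have e2 : zfact (0:ℤ) = 1 := rfl
    have e3 : G - 1 - (0:ℤ) = G - 1 := by ring
    rw [e1, e2, e3, one_mul, mul_one, mul_div_assoc, div_self (zfact_ne _), mul_one]
  rw [b, hc, show 6 * G - 3 - 2 * 0 = 6 * G - 3 by ring]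
  ring

lemma sum_eq (G : ℤ) (hG : 1 ≤ G) : ∀ n : ℕ, 1 ≤ n → (n : ℤ) ≤ 3 * G - 1 →
    (∑ l ∈ Finset.Icc (0 : ℤ) (n : ℤ), a (l - 1) (3 * G - l)) =
      df (6 * G - 1) / ((24 : ℚ) ^ G * zfact G) * b G ((n : ℤ) - 1) := by
  intro n h1
  induction n, h1 using Nat.le_induction with
  | base =>
    intro _
    rw [show ((1 : ℕ) : ℤ) = 0 + 1 by norm_num, Icc_ins 0 0 (by norm_num),
      Finset.sum_insert (by simp), Finset.Icc_self, Finset.sum_singleton]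
    rw [show (0 + 1 - 1 : ℤ) = 0 by ring, show (3 * G - (0 + 1) : ℤ) = 3 * G - 1 by ring,
      show (0 - 1 : ℤ) = -1 by ring, show (3 * G - 0 : ℤ) = 3 * G by ring,
      a0 G (by omega), aM1 G (by omega), bval0 G hG]
    have d1 : df (6 * G - 1) = (6 * (G : ℚ) - 1) * df (6 * G - 3) := by
      have h := df_step (6 * G - 3) (by omega) (by omega)
      rw [show (6 * G - 1 : ℤ) = 6 * G - 3 + 2 by ring, h]
      push_cast; ring
    rw [d1]
    have n1 : df (6 * G - 3) ≠ 0 := df_ne _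
    have n5 : zfact G ≠ 0 := zfact_ne _
    have n6 : (24 : ℚ) ^ G ≠ 0 := zpow_ne_zero _ (by norm_num)
    have h9 : ((6 * G - 1 : ℤ) : ℚ) ≠ 0 := Int.cast_ne_zero.mpr (by omega)
    push_cast at h9
    have n8 : 6 * (G : ℚ) - 1 ≠ 0 := by intro hEq; exact h9 (by linear_combination hEq)
    field_simp
    ring
  | succ n hn IH =>
    intro hle
    have hle' : (n : ℤ) ≤ 3 * G - 1 := by push_cast at hle ⊢; omega
    have hcast : ((n + 1 : ℕ) : ℤ) = (n : ℤ) + 1 := by push_cast; ring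
    rw [hcast, Icc_ins 0 (n : ℤ) (by omega), Finset.sum_insert (by simp), IH hle']
    have key : a ((n : ℤ) + 1 - 1) (3 * G - ((n : ℤ) + 1)) =
        df (6 * G - 1) / ((24 : ℚ) ^ G * zfact G) * (b G (n : ℤ) - b G ((n : ℤ) - 1)) := by
      set m : ℤ := (n : ℤ) with hm
      have hm1 : 1 ≤ m := by omega
      have hm2 : m + 1 ≤ 3 * G - 1 := by push_cast at hle; omega
      have h3 : m % 3 = 0 ∨ m % 3 = 1 ∨ m % 3 = 2 := by omega
      rcases h3 with h3 | h3 | h3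
      · have hk : m = 3 * (m / 3) := by omega
        set k := m / 3 with hkd
        have hk1 : 0 ≤ k := by omega
        have hk2 : k + 1 ≤ G := by omega
        have := step1 k G hk1 hk2
        rw [show m + 1 - 1 = 3 * k by omega, show 3 * G - (m + 1) = 3 * G - (3 * k + 1) by omega,
          this, show m = 3 * k by omega, show 3 * k - 1 = 3 * k - 1 by ring]
      · have hk : m = 3 * (m / 3) + 1 := by omega
        set k := m / 3 with hkd
        have hk1 : 0 ≤ k := by omega
        have hk2 : k + 1 ≤ G := by omega
        have := step2 k G hk1 hk2
        rw [show m + 1 - 1 = 3 * k + 1 by omega,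
          show 3 * G - (m + 1) = 3 * G - (3 * k + 2) by omega, this,
          show m = 3 * k + 1 by omega, show 3 * k + 1 - 1 = 3 * k by ring]
      · have hk : m = 3 * ((m + 1) / 3) - 1 := by omega
        set k := (m + 1) / 3 with hkd
        have hk1 : 1 ≤ k := by omega
        have hk2 : k ≤ G := by omega
        have := step0 k G hk1 hk2
        rw [show m + 1 - 1 = 3 * k - 1 by omega,
          show 3 * G - (m + 1) = 3 * G - 3 * k by omega, this,
          show m = 3 * k - 1 by omega, show 3 * k - 1 - 1 = 3 * k - 2 by ring]
    rw [key, show (n : ℤ) + 1 - 1 = (n : ℤ) by ring]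
    ring

lemma swapSum (f : ℤ → ℚ) : ∀ n : ℕ,
    (∑ l ∈ Finset.Icc (0 : ℤ) (n : ℤ), (((n : ℤ) + 1 - l : ℤ) : ℚ) * f l) =
      ∑ m ∈ Finset.Icc (0 : ℤ) (n : ℤ), ∑ l ∈ Finset.Icc (0 : ℤ) m, f l := by
  intro n
  induction n with
  | zero => simp
  | succ n IH =>
    have hcast : ((n + 1 : ℕ) : ℤ) = (n : ℤ) + 1 := by push_cast; ring
    rw [hcast, Icc_ins 0 (n : ℤ) (by omega), Finset.sum_insert (by simp),
      Finset.sum_insert (by simp)]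
    have split : ∀ l ∈ Finset.Icc (0 : ℤ) (n : ℤ),
        ((((n : ℤ) + 1) + 1 - l : ℤ) : ℚ) * f l = (((n : ℤ) + 1 - l : ℤ) : ℚ) * f l + f l := by
      intro l _
      push_cast
      ring
    rw [Finset.sum_congr rfl split, Finset.sum_add_distrib, IH,
      Icc_ins 0 (n : ℤ) (by omega), Finset.sum_insert (by simp)]
    push_cast
    ring


theorem stmt1 (g1 g2 g : ℤ) (hg1 : 0 ≤ g1) (hg2 : 0 ≤ g2) (hg : g = g1 + g2 + 1) :
    (∑ l ∈ Finset.Icc (0 : ℤ) (3 * g1 + 2), ((3 * g1 + 3 - l : ℤ) : ℚ) * a (l - 1) (3 * g - l)) /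
        (df (6 * g1 + 5) * df (6 * g2 + 1)) =
      df (6 * g - 1) / ((24 : ℚ) ^ g * zfact g * df (6 * g1 + 5) * df (6 * g2 + 1)) *
        ((6 * (g : ℚ) - 3) / (6 * (g : ℚ) - 1) + ∑ i ∈ Finset.Icc (1 : ℤ) (3 * g1 + 1), b g i) := by
  have hG : 1 ≤ g := by omega
  obtain ⟨n, hn⟩ : ∃ n : ℕ, (n : ℤ) = 3 * g1 + 2 := ⟨(3 * g1 + 2).toNat, by omega⟩
  have e0 : Finset.Icc (0 : ℤ) (3 * g1 + 2) = Finset.Icc (0 : ℤ) (n : ℤ) := by rw [hn]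
  have e1 : ∀ l ∈ Finset.Icc (0 : ℤ) (n : ℤ),
      ((3 * g1 + 3 - l : ℤ) : ℚ) * a (l - 1) (3 * g - l) =
        (((n : ℤ) + 1 - l : ℤ) : ℚ) * a (l - 1) (3 * g - l) := by
    intro l _
    rw [show (3 * g1 + 3 - l : ℤ) = (n : ℤ) + 1 - l by omega]
  rw [e0, Finset.sum_congr rfl e1, swapSum (fun l => a (l - 1) (3 * g - l)) n]
  rw [Icc_ins_bot 0 (n : ℤ) (by omega), Finset.sum_insert (by simp),
    Finset.Icc_self, Finset.sum_singleton,
    show (0 - 1 : ℤ) = -1 by ring, show (3 * g - 0 : ℤ) = 3 * g by ring, aM1 g (by omega)]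
  have hS : ∀ m ∈ Finset.Icc (0 + 1 : ℤ) (n : ℤ),
      (∑ l ∈ Finset.Icc (0 : ℤ) m, a (l - 1) (3 * g - l)) =
        df (6 * g - 1) / ((24 : ℚ) ^ g * zfact g) * b g (m - 1) := by
    intro m hm
    simp only [Finset.mem_Icc] at hm
    have h1 := sum_eq g hG m.toNat (by omega) (by rw [Int.toNat_of_nonneg (by omega)]; omega)
    rw [Int.toNat_of_nonneg (by omega : (0:ℤ) ≤ m)] at h1
    exact h1
  rw [Finset.sum_congr rfl hS, ← Finset.mul_sum]
  have e2 : Finset.Icc (0 + 1 : ℤ) (n : ℤ) =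
      (Finset.Icc (0 : ℤ) ((n : ℤ) - 1)).map (addRightEmbedding 1) := by
    rw [Finset.map_add_right_Icc]
    norm_num
  rw [e2, Finset.sum_map]
  have e3 : ∀ i ∈ Finset.Icc (0 : ℤ) ((n : ℤ) - 1),
      b g (addRightEmbedding 1 i - 1) = b g i := by
    intro i _
    simp [addRightEmbedding]
  rw [Finset.sum_congr rfl e3, show (n : ℤ) - 1 = 3 * g1 + 1 by omega,
    Icc_ins_bot 0 (3 * g1 + 1) (by omega), Finset.sum_insert (by simp),
    show (0 + 1 : ℤ) = 1 by ring, bval0 g hG]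
  have d1 : df (6 * g - 1) = (6 * (g : ℚ) - 1) * df (6 * g - 3) := by
    have h := df_step (6 * g - 3) (by omega) (by omega)
    rw [show (6 * g - 1 : ℤ) = 6 * g - 3 + 2 by ring, h]
    push_cast
    ring
  rw [d1]
  have n1 : df (6 * g - 3) ≠ 0 := df_ne _
  have n2 : df (6 * g1 + 5) ≠ 0 := df_ne _
  have n3 : df (6 * g2 + 1) ≠ 0 := df_ne _
  have n5 : zfact g ≠ 0 := zfact_ne _
  have n6 : (24 : ℚ) ^ g ≠ 0 := zpow_ne_zero _ (by norm_num)
  have h9 : ((6 * g - 1 : ℤ) : ℚ) ≠ 0 := Int.cast_ne_zero.mpr (by omega)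
  push_cast at h9
  have n8 : 6 * (g : ℚ) - 1 ≠ 0 := by intro hEq; exact h9 (by linear_combination hEq)
  field_simp
  ring
end

section
/- For every integer g ≥ 1 and every integer k with -1 ≤ k ≤ 3g-2, the following identity holds in the rationals: ((6g-1)!!/(24^g·g!))·b_{g,k} = Σ_{l=0}^{k+1} a_{l-1, 3g-l}. -/
lemma b_eval2 (g j : ℤ) : b g (3*j-1) =
    df (6*g-6*j-1) / df (6*g-1) *
      (df (6*j-1) * zfact (g-1) / (zfact j * zfact (g-j)) * ((g:ℚ) - 2*(j:ℚ))) := by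
  unfold b c
  rw [if_pos (by omega)]
  rw [show (3*j-1+1)/3 = j by omega, show 6*g-3-2*(3*j-1) = 6*g-6*j-1 by ring]

lemma b_eval0 (g j : ℤ) : b g (3*j) =
    df (6*g-6*j-3) / df (6*g-1) *
      (-2 * df (6*j+1) * zfact (g-1) / (zfact j * zfact (g-1-j))) := by
  unfold b c
  rw [if_neg (by omega), if_pos (by omega)]
  rw [show (3*j)/3 = j by omega, show 6*g-3-2*(3*j) = 6*g-6*j-3 by ring]

lemma b_eval1 (g j : ℤ) : b g (3*j+1) =
    df (6*g-6*j-5) / df (6*g-1) *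
      (2 * df (6*j+3) * zfact (g-1) / (zfact j * zfact (g-1-j))) := by
  unfold b c
  rw [if_neg (by omega), if_neg (by omega)]
  rw [show (3*j+1-1)/3 = j by omega, show 6*g-3-2*(3*j+1) = 6*g-6*j-5 by ring]

lemma df_step_s2 (t : ℤ) (ht : 0 ≤ t) : df (2*t+1) = (2*(t:ℚ)+1) * df (2*t-1) := by
  unfold df
  rw [show (2*t+1+1)/2 = t+1 by omega, show (2*t-1+1)/2 = t by omega]
  obtain ⟨n, rfl⟩ := Int.eq_ofNat_of_zero_le ht
  rw [show ((n:ℤ)+1).toNat = n+1 by omega, Int.toNat_natCast]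
  show dfOdd (n+1) = _
  simp only [dfOdd]
  push_cast
  ring
lemma zfact_step_s2 (t : ℤ) (ht : 0 ≤ t) : zfact (t+1) = ((t:ℚ)+1) * zfact t := by
  unfold zfact
  obtain ⟨n, rfl⟩ := Int.eq_ofNat_of_zero_le ht
  rw [show ((n:ℤ)+1).toNat = n+1 by omega, Int.toNat_natCast, Nat.factorial_succ]
  push_cast
  ring

-- case A: k1 = 3j, k2 = 3g-3j-1
lemma a_evalA (g j : ℤ) (h0 : 0 ≤ j) (h1 : j ≤ g - 1) :
    a (3*j) (3*g-3*j-1) =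
      -((6*(g:ℚ)-6*(j:ℚ)+1) * df (6*j-1) * df (6*g-6*j-3) /
        ((24:ℚ)^g * zfact j * zfact (g-j))) := by
  unfold a
  rw [if_neg (by omega), if_pos (by omega)]
  rw [show (3*j)/3 = j by omega, show (3*g-3*j-1+1)/3 = g - j by omega]
  simp only []
  rw [show (6*(g-j)-1 : ℤ) = 6*g-6*j-1 by ring, show j + (g - j) = g by ring]
  have hd : df (6*g-6*j-1) = (2*((3*g-3*j-1 : ℤ):ℚ)+1) * df (6*g-6*j-3) := by
    have := df_step_s2 (3*g-3*j-1) (by omega)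
    rw [show 2*(3*g-3*j-1)+1 = 6*g-6*j-1 by ring, show 2*(3*g-3*j-1)-1 = 6*g-6*j-3 by ring] at this
    exact this
  rw [hd]
  have hne : (6*((g-j : ℤ):ℚ) - 1) ≠ 0 := by
    have h2 : (1:ℤ) ≤ g - j := by omega
    have : (1:ℚ) ≤ ((g-j : ℤ):ℚ) := by exact_mod_cast h2
    intro h; rw [sub_eq_zero] at h; nlinarith
  have h24 : (24:ℚ)^g ≠ 0 := zpow_ne_zero _ (by norm_num)
  have hP : (24:ℚ)^g * zfact j * zfact (g-j) ≠ 0 :=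
    mul_ne_zero (mul_ne_zero h24 (zfact_ne _)) (zfact_ne _)
  rw [neg_mul, neg_inj, div_mul_div_comm, div_eq_div_iff (mul_ne_zero hP hne) hP]
  push_cast
  ring

-- case B: k1 = 3j+1, k2 = 3g-3j-2
lemma a_evalB (g j : ℤ) (h0 : 0 ≤ j) (h1 : j ≤ g - 1) :
    a (3*j+1) (3*g-3*j-2) =
      df (6*j+1) * df (6*g-6*j-5) / (2 * (24:ℚ)^(g-1) * zfact j * zfact (g-1-j)) := by
  unfold a
  rw [if_pos (by omega)]
  rw [show (3*j+1+2)/3 = j+1 by omega, show (3*g-3*j-2+2)/3 = g - j by omega]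
  simp only []
  rw [show (6*(j+1)-5 : ℤ) = 6*j+1 by ring, show (6*(g-j)-5 : ℤ) = 6*g-6*j-5 by ring,
      show (j+1) + (g-j) - 2 = g - 1 by ring, show j+1-1 = j by ring,
      show g-j-1 = g-1-j by ring]

-- case C: k1 = 3j+2, k2 = 3g-3j-3
lemma a_evalC (g j : ℤ) (h0 : 0 ≤ j) (h1 : j ≤ g - 1) :
    a (3*j+2) (3*g-3*j-3) =
      -((6*(j:ℚ)+7) * df (6*j+3) * df (6*g-6*j-7) /
        ((24:ℚ)^g * zfact (j+1) * zfact (g-1-j))) := by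
  unfold a
  rw [if_neg (by omega), if_neg (by omega), if_pos (by omega)]
  rw [show (3*j+2+1)/3 = j+1 by omega, show (3*g-3*j-3)/3 = g-1-j by omega]
  simp only []
  rw [show (6*(j+1)-1 : ℤ) = 6*j+5 by ring, show (6*(g-1-j)-1 : ℤ) = 6*g-6*j-7 by ring,
      show (j+1) + (g-1-j) = g by ring]
  have hd : df (6*j+5) = (2*((3*j+2 : ℤ):ℚ)+1) * df (6*j+3) := by
    have := df_step_s2 (3*j+2) (by omega)
    rw [show 2*(3*j+2)+1 = 6*j+5 by ring, show 2*(3*j+2)-1 = 6*j+3 by ring] at this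
    exact this
  rw [hd]
  have hne : (6*((j+1 : ℤ):ℚ) - 1) ≠ 0 := by
    have h2 : (1:ℤ) ≤ j + 1 := by omega
    have : (1:ℚ) ≤ ((j+1 : ℤ):ℚ) := by exact_mod_cast h2
    intro h; rw [sub_eq_zero] at h; nlinarith
  have h24 : (24:ℚ)^g ≠ 0 := zpow_ne_zero _ (by norm_num)
  have hP : (24:ℚ)^g * zfact (j+1) * zfact (g-1-j) ≠ 0 :=
    mul_ne_zero (mul_ne_zero h24 (zfact_ne _)) (zfact_ne _)
  rw [neg_mul, neg_inj, div_mul_div_comm, div_eq_div_iff (mul_ne_zero hP hne) hP]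
  push_cast
  ring

lemma base_case (g : ℤ) (hg : 1 ≤ g) :
    df (6*g-1) / ((24:ℚ)^g * zfact g) * b g (-1) = a (-1) (3*g) := by
  have hb := b_eval2 g 0
  norm_num at hb
  rw [hb]
  unfold a
  rw [if_neg (by omega), if_neg (by omega), if_pos (by omega)]
  rw [show ((-1:ℤ)+1)/3 = 0 by omega, show (3*g)/3 = g by omega]
  simp only []
  have hzg : zfact g = (g:ℚ) * zfact (g-1) := by
    have := zfact_step_s2 (g-1) (by omega)
    rw [show (g-1+1 : ℤ) = g by ring] at this
    rw [this]; push_cast; ring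
  have hgQ : ((g:ℚ)) ≠ 0 := by
    have : (1:ℚ) ≤ (g:ℚ) := by exact_mod_cast hg
    intro h; rw [h] at this; norm_num at this
  have h24 : (24:ℚ)^g ≠ 0 := zpow_ne_zero _ (by norm_num)
  have hdm1 : df (-1) = 1 := by norm_num [df, dfOdd]
  have hz0 : zfact 0 = 1 := by norm_num [zfact, Nat.factorial]
  rw [show (6*(0:ℤ)-1) = -1 by norm_num, show (0:ℤ)+g = g by ring, hdm1, hz0, hzg]
  rw [show ((0:ℤ):ℚ) = 0 by norm_num]
  field_simp [df_ne, zfact_ne]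
  ring

lemma step_caseA (g j : ℤ) (hg : 1 ≤ g) (hj0 : 0 ≤ j) (hj1 : j ≤ g-1) :
    df (6*g-1) / ((24:ℚ)^g * zfact g) * b g (3*j) =
    df (6*g-1) / ((24:ℚ)^g * zfact g) * b g (3*j-1) + a (3*j) (3*g-3*j-1) := by
  have h24 : (24:ℚ)^g ≠ 0 := zpow_ne_zero _ (by norm_num)
  rw [b_eval0, b_eval2, a_evalA g j hj0 hj1, ← neg_div]
  simp only [div_mul_div_comm, div_mul_eq_mul_div, mul_div_assoc', div_div]
  rw [div_add_div _ _ (by apply_rules [mul_ne_zero, df_ne, zfact_ne])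
      (by apply_rules [mul_ne_zero, df_ne, zfact_ne]),
    div_eq_div_iff (by apply_rules [mul_ne_zero, df_ne, zfact_ne])
      (by apply_rules [mul_ne_zero, df_ne, zfact_ne])]
  have hd1 : df (6*j+1) = (2*((3*j:ℤ):ℚ)+1) * df (6*j-1) := by
    have := df_step_s2 (3*j) (by omega)
    rw [show 2*(3*j)+1 = 6*j+1 by ring, show 2*(3*j)-1 = 6*j-1 by ring] at this
    exact this
  have hd2 : df (6*g-6*j-1) = (2*((3*g-3*j-1:ℤ):ℚ)+1) * df (6*g-6*j-3) := by
    have := df_step_s2 (3*g-3*j-1) (by omega)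
    rw [show 2*(3*g-3*j-1)+1 = 6*g-6*j-1 by ring,
        show 2*(3*g-3*j-1)-1 = 6*g-6*j-3 by ring] at this
    exact this
  have hz : zfact (g-j) = ((g:ℚ)-(j:ℚ)) * zfact (g-1-j) := by
    have := zfact_step_s2 (g-1-j) (by omega)
    rw [show (g-1-j+1:ℤ) = g-j by ring] at this
    rw [this]; push_cast; ring
  have hzg : zfact g = (g:ℚ) * zfact (g-1) := by
    have := zfact_step_s2 (g-1) (by omega)
    rw [show (g-1+1 : ℤ) = g by ring] at this
    rw [this]; push_cast; ring
  rw [hd1, hd2, hz, hzg]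
  push_cast
  ring

lemma step_caseB (g j : ℤ) (hg : 1 ≤ g) (hj0 : 0 ≤ j) (hj1 : j ≤ g-1) :
    df (6*g-1) / ((24:ℚ)^g * zfact g) * b g (3*j+1) =
    df (6*g-1) / ((24:ℚ)^g * zfact g) * b g (3*j) + a (3*j+1) (3*g-3*j-2) := by
  have h24 : (24:ℚ)^g ≠ 0 := zpow_ne_zero _ (by norm_num)
  have h24' : (24:ℚ)^(g-1) ≠ 0 := zpow_ne_zero _ (by norm_num)
  rw [b_eval1, b_eval0, a_evalB g j hj0 hj1]
  simp only [div_mul_div_comm, div_mul_eq_mul_div, mul_div_assoc', div_div]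
  rw [div_add_div _ _ (by apply_rules [mul_ne_zero, df_ne, zfact_ne])
      (by apply_rules [mul_ne_zero, df_ne, zfact_ne, two_ne_zero]),
    div_eq_div_iff (by apply_rules [mul_ne_zero, df_ne, zfact_ne])
      (by apply_rules [mul_ne_zero, df_ne, zfact_ne, two_ne_zero])]
  have hd1 : df (6*j+3) = (2*((3*j+1:ℤ):ℚ)+1) * df (6*j+1) := by
    have := df_step_s2 (3*j+1) (by omega)
    rw [show 2*(3*j+1)+1 = 6*j+3 by ring, show 2*(3*j+1)-1 = 6*j+1 by ring] at this
    exact this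
  have hd2 : df (6*g-6*j-3) = (2*((3*g-3*j-2:ℤ):ℚ)+1) * df (6*g-6*j-5) := by
    have := df_step_s2 (3*g-3*j-2) (by omega)
    rw [show 2*(3*g-3*j-2)+1 = 6*g-6*j-3 by ring,
        show 2*(3*g-3*j-2)-1 = 6*g-6*j-5 by ring] at this
    exact this
  have hzg : zfact g = (g:ℚ) * zfact (g-1) := by
    have := zfact_step_s2 (g-1) (by omega)
    rw [show (g-1+1 : ℤ) = g by ring] at this
    rw [this]; push_cast; ring
  have hp : (24:ℚ)^g = (24:ℚ)^(g-1) * 24 := by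
    have := zpow_add_one₀ (show (24:ℚ) ≠ 0 by norm_num) (g-1)
    rw [show g-1+1 = g by ring] at this
    exact this
  rw [hd1, hd2, hzg, hp]
  push_cast
  ring

lemma step_caseC (g j : ℤ) (hg : 1 ≤ g) (hj0 : 0 ≤ j) (hj1 : j ≤ g-2) :
    df (6*g-1) / ((24:ℚ)^g * zfact g) * b g (3*(j+1)-1) =
    df (6*g-1) / ((24:ℚ)^g * zfact g) * b g (3*j+1) + a (3*j+2) (3*g-3*j-3) := by
  have h24 : (24:ℚ)^g ≠ 0 := zpow_ne_zero _ (by norm_num)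
  rw [b_eval1, b_eval2 g (j+1), a_evalC g j hj0 (by omega), ← neg_div]
  rw [show (6*g-6*(j+1)-1 : ℤ) = 6*g-6*j-7 by ring,
      show (6*(j+1)-1 : ℤ) = 6*j+5 by ring,
      show (g-(j+1) : ℤ) = g-1-j by ring]
  simp only [div_mul_div_comm, div_mul_eq_mul_div, mul_div_assoc', div_div]
  rw [div_add_div _ _ (by apply_rules [mul_ne_zero, df_ne, zfact_ne])
      (by apply_rules [mul_ne_zero, df_ne, zfact_ne]),
    div_eq_div_iff (by apply_rules [mul_ne_zero, df_ne, zfact_ne])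
      (by apply_rules [mul_ne_zero, df_ne, zfact_ne])]
  have hd1 : df (6*j+5) = (2*((3*j+2:ℤ):ℚ)+1) * df (6*j+3) := by
    have := df_step_s2 (3*j+2) (by omega)
    rw [show 2*(3*j+2)+1 = 6*j+5 by ring, show 2*(3*j+2)-1 = 6*j+3 by ring] at this
    exact this
  have hd2 : df (6*g-6*j-5) = (2*((3*g-3*j-3:ℤ):ℚ)+1) * df (6*g-6*j-7) := by
    have := df_step_s2 (3*g-3*j-3) (by omega)
    rw [show 2*(3*g-3*j-3)+1 = 6*g-6*j-5 by ring,
        show 2*(3*g-3*j-3)-1 = 6*g-6*j-7 by ring] at this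
    exact this
  have hz : zfact (j+1) = ((j:ℚ)+1) * zfact j := zfact_step_s2 j hj0
  have hzg : zfact g = (g:ℚ) * zfact (g-1) := by
    have := zfact_step_s2 (g-1) (by omega)
    rw [show (g-1+1 : ℤ) = g by ring] at this
    rw [this]; push_cast; ring
  rw [hd1, hd2, hz, hzg]
  push_cast
  ring

lemma step_case (g k : ℤ) (hg : 1 ≤ g) (hk : -1 ≤ k) (hk2 : k ≤ 3*g-3) :
    df (6*g-1) / ((24:ℚ)^g * zfact g) * b g (k+1) =
    df (6*g-1) / ((24:ℚ)^g * zfact g) * b g k + a (k+1) (3*g-k-2) := by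
  rcases (by omega : k % 3 = 2 ∨ k % 3 = 0 ∨ k % 3 = 1) with h|h|h
  · obtain ⟨j, rfl⟩ : ∃ j, k = 3*j-1 := ⟨(k+1)/3, by omega⟩
    rw [show 3*j-1+1 = 3*j by ring, show 3*g-(3*j-1)-2 = 3*g-3*j-1 by ring]
    exact step_caseA g j hg (by omega) (by omega)
  · obtain ⟨j, rfl⟩ : ∃ j, k = 3*j := ⟨k/3, by omega⟩
    rw [show 3*g-3*j-2 = 3*g-3*j-2 by ring]
    exact step_caseB g j hg (by omega) (by omega)
  · obtain ⟨j, rfl⟩ : ∃ j, k = 3*j+1 := ⟨(k-1)/3, by omega⟩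
    rw [show 3*j+1+1 = 3*(j+1)-1 by ring, show 3*g-(3*j+1)-2 = 3*g-3*j-3 by ring,
        show (3*(j+1)-1 : ℤ) = 3*j+2 by ring]
    rw [show (3*j+2 : ℤ) = 3*(j+1)-1 by ring]
    have := step_caseC g j hg (by omega) (by omega)
    rw [show (3*(j+1)-1 : ℤ) = 3*j+2 by ring] at this ⊢
    exact this

theorem stmt2 (g k : ℤ) (hg : 1 ≤ g) (hk1 : -1 ≤ k) (hk2 : k ≤ 3 * g - 2) :
    df (6 * g - 1) / ((24 : ℚ) ^ g * zfact g) * b g k =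
      ∑ l ∈ Finset.Icc (0 : ℤ) (k + 1), a (l - 1) (3 * g - l) := by
  revert hk2
  refine Int.le_induction
    (motive := fun k _ => k ≤ 3 * g - 2 →
      df (6 * g - 1) / ((24 : ℚ) ^ g * zfact g) * b g k =
        ∑ l ∈ Finset.Icc (0 : ℤ) (k + 1), a (l - 1) (3 * g - l)) ?_ ?_ k hk1
  · intro _
    rw [show (-1:ℤ)+1 = 0 by ring, Finset.Icc_self, Finset.sum_singleton]
    rw [show (0:ℤ)-1 = -1 by ring, show 3*g-0 = 3*g by ring]
    exact base_case g hg
  · intro n hn ih hk2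
    have ihh := ih (by omega)
    have hins : Finset.Icc (0:ℤ) (n+1+1) = insert (n+1+1) (Finset.Icc 0 (n+1)) := by
      ext x
      simp only [Finset.mem_Icc, Finset.mem_insert]
      omega
    rw [hins, Finset.sum_insert (by simp)]
    rw [show n+1+1-1 = n+1 by ring, show 3*g-(n+1+1) = 3*g-n-2 by ring]
    rw [step_case g n hg hn (by omega), ihh]
    ring
end
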